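/- Let (B,⌊·,·⌋) be an SSD space and A be a maximally q-positive subset of B. Then Φ_A is a BC-function, and P_q(Φ_A^@) = P_q(Φ_A) = A. -/
import Mathlib


noncomputable section

variable {B : Type*} [AddCommGroup B] [Module ℝ B]

/-- The quadratic form `q(b) = ½⌊b,b⌋` associated with a bilinear form. -/
def qForm (br : B →ₗ[ℝ] B →ₗ[ℝ] ℝ) (b : B) : ℝ := (1 / 2) * br b b

/-- The intrinsic conjugate `f^@(c) = sup_{b} (⌊b,c⌋ - f(b))`. -/
def intrinsicConj (br : B →ₗ[ℝ] B →ₗ[ℝ] ℝ) (f : B → EReal) (c : B) : EReal :=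
  ⨆ b : B, ((br b c : ℝ) : EReal) - f b

/-- A proper function from `B` into `(-∞,∞]`: never `⊥` and somewhere finite. -/
def ProperFn (f : B → EReal) : Prop := (∀ b, f b ≠ ⊥) ∧ ∃ b, f b ≠ ⊤

/-- Convexity for `(-∞,∞]`-valued functions. -/
def ConvexFn (f : B → EReal) : Prop :=
  ∀ b c : B, ∀ t : ℝ, 0 ≤ t → t ≤ 1 →
    f (t • b + (1 - t) • c) ≤ (t : EReal) * f b + ((1 - t : ℝ) : EReal) * f c

/-- `A` is q-positive: nonempty and `q(b - c) ≥ 0` for all `b, c ∈ A`. -/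
def QPos (br : B →ₗ[ℝ] B →ₗ[ℝ] ℝ) (A : Set B) : Prop :=
  A.Nonempty ∧ ∀ b ∈ A, ∀ c ∈ A, 0 ≤ qForm br (b - c)

/-- `A` is maximally q-positive. -/
def MaxQPos (br : B →ₗ[ℝ] B →ₗ[ℝ] ℝ) (A : Set B) : Prop :=
  QPos br A ∧ ∀ C : Set B, QPos br C → A ⊆ C → C = A

/-- `Φ_A(b) = sup_{a ∈ A} (⌊a,b⌋ - q(a))`. -/
def PhiA (br : B →ₗ[ℝ] B →ₗ[ℝ] ℝ) (A : Set B) (b : B) : EReal :=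
  ⨆ a : A, ((br (a : B) b - qForm br (a : B) : ℝ) : EReal)

/-- `P_q(f) = {b : f(b) = q(b)}`. -/
def Pq (br : B →ₗ[ℝ] B →ₗ[ℝ] ℝ) (f : B → EReal) : Set B :=
  {b : B | f b = ((qForm br b : ℝ) : EReal)}

/-- `N_q(g) = {b : g(b) = -q(b)}`. -/
def Nq (br : B →ₗ[ℝ] B →ₗ[ℝ] ℝ) (f : B → EReal) : Set B :=
  {b : B | f b = ((-(qForm br b) : ℝ) : EReal)}

/-- `f` is a BC-function: `f^@(b) ≥ f(b) ≥ q(b)` for all `b`. -/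
def IsBC (br : B →ₗ[ℝ] B →ₗ[ℝ] ℝ) (f : B → EReal) : Prop :=
  ∀ b : B, ((qForm br b : ℝ) : EReal) ≤ f b ∧ f b ≤ intrinsicConj br f b

/-- `g` is a TBC-function: `g^@(-b) ≥ g(b) ≥ -q(b)` for all `b`. -/
def IsTBC (br : B →ₗ[ℝ] B →ₗ[ℝ] ℝ) (g : B → EReal) : Prop :=
  ∀ b : B, ((-(qForm br b) : ℝ) : EReal) ≤ g b ∧ g b ≤ intrinsicConj br g (-b)

/-- The effective domain `dom f = {b : f(b) ∈ ℝ}`. -/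
def domE (f : B → EReal) : Set B := {b : B | ∃ r : ℝ, f b = (r : EReal)}


section Aux

variable {B : Type*} [AddCommGroup B] [Module ℝ B]

lemma qForm_sub' (br : B →ₗ[ℝ] B →ₗ[ℝ] ℝ) (hsymm : ∀ b c : B, br b c = br c b) (b c : B) :
    qForm br (b - c) = qForm br b + qForm br c - br c b := by
  simp only [qForm, map_sub, LinearMap.sub_apply]
  rw [hsymm b c]; ring

lemma coe_mul_le_mul' (t : ℝ) (ht : 0 ≤ t) (u : ℝ) (y : EReal) (h : (u : EReal) ≤ y) :
    ((t * u : ℝ) : EReal) ≤ (t : EReal) * y := by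
  rcases eq_or_lt_of_le ht with rfl | htpos
  · simp [EReal.zero_mul]
  induction y using EReal.rec with
  | bot => exact absurd h (by simp)
  | coe r =>
      rw [← EReal.coe_mul, EReal.coe_le_coe_iff]
      exact mul_le_mul_of_nonneg_left (by exact_mod_cast h) ht
  | top => rw [EReal.mul_top_of_pos (by exact_mod_cast htpos)]; exact le_top

/-- If `Φ_A b ≤ q b` then `b ∈ A`, for maximally q-positive `A`. -/
lemma mem_of_phi_le (br : B →ₗ[ℝ] B →ₗ[ℝ] ℝ) (hsymm : ∀ b c : B, br b c = br c b)
    (A : Set B) (hA : MaxQPos br A) (b : B)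
    (h : PhiA br A b ≤ ((qForm br b : ℝ) : EReal)) : b ∈ A := by
  have hpos : ∀ a ∈ A, 0 ≤ qForm br (b - a) := by
    intro a ha
    have h1 : ((br a b - qForm br a : ℝ) : EReal) ≤ ((qForm br b : ℝ) : EReal) :=
      le_trans (le_iSup (fun a : A => ((br (a : B) b - qForm br (a : B) : ℝ) : EReal)) ⟨a, ha⟩) h
    have h2 : br a b - qForm br a ≤ qForm br b := EReal.coe_le_coe_iff.mp h1
    rw [qForm_sub' br hsymm b a]; linarith
  have hqsym : ∀ u v : B, qForm br (u - v) = qForm br (v - u) := by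
    intro u v
    have h : v - u = -(u - v) := by abel
    rw [h]; simp only [qForm, map_neg, LinearMap.neg_apply, neg_neg]
  have hqC : QPos br (insert b A) := by
    refine ⟨⟨b, Set.mem_insert b A⟩, ?_⟩
    rintro x hx' y hy'
    rcases hx' with rfl | hx
    · rcases hy' with rfl | hy
      · simp [qForm]
      · exact hpos y hy
    · rcases hy' with rfl | hy
      · rw [hqsym x y]; exact hpos x hx
      · exact hA.1.2 x hx y hy
  have := hA.2 (insert b A) hqC (Set.subset_insert b A)
  rw [← this]; exact Set.mem_insert b A

/-- For `b ∈ A`, `Φ_A b = q b`. -/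
lemma phi_eq_of_mem (br : B →ₗ[ℝ] B →ₗ[ℝ] ℝ) (hsymm : ∀ b c : B, br b c = br c b)
    (A : Set B) (hA : QPos br A) (b : B) (hb : b ∈ A) :
    PhiA br A b = ((qForm br b : ℝ) : EReal) := by
  apply le_antisymm
  · apply iSup_le
    rintro ⟨a, ha⟩
    rw [EReal.coe_le_coe_iff]
    have := hA.2 b hb a ha
    rw [qForm_sub' br hsymm b a] at this
    have hab : br a b = br b a := hsymm a b
    simp only
    linarith
  · have := le_iSup (fun a : A => ((br (a : B) b - qForm br (a : B) : ℝ) : EReal)) ⟨b, hb⟩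
    simp only at this
    have hbb : br b b - qForm br b = qForm br b := by simp [qForm]; ring
    rwa [hbb] at this

/-- `q ≤ Φ_A` everywhere, for maximally q-positive `A`. -/
lemma q_le_phi (br : B →ₗ[ℝ] B →ₗ[ℝ] ℝ) (hsymm : ∀ b c : B, br b c = br c b)
    (A : Set B) (hA : MaxQPos br A) (b : B) :
    ((qForm br b : ℝ) : EReal) ≤ PhiA br A b := by
  rcases le_total (PhiA br A b) ((qForm br b : ℝ) : EReal) with h | h
  · have hb := mem_of_phi_le br hsymm A hA b h
    rw [phi_eq_of_mem br hsymm A hA.1 b hb]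
  · exact h

end Aux



/-- if `A` is maximally q-positive then `Φ_A` is a BC-function and
`P_q(Φ_A^@) = P_q(Φ_A) = A`. -/
theorem stmt3 [Nontrivial B] (br : B →ₗ[ℝ] B →ₗ[ℝ] ℝ)
    (hsymm : ∀ b c : B, br b c = br c b)
    (A : Set B) (hA : MaxQPos br A) :
    (ProperFn (PhiA br A) ∧ ConvexFn (PhiA br A) ∧ IsBC br (PhiA br A)) ∧
      Pq br (intrinsicConj br (PhiA br A)) = A ∧ Pq br (PhiA br A) = A := by
  obtain ⟨a₀, ha₀⟩ := hA.1.1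
  have hqle := q_le_phi br hsymm A hA
  -- Φ ≤ conj Φ
  have hconj_ge : ∀ b, PhiA br A b ≤ intrinsicConj br (PhiA br A) b := by
    intro b
    apply iSup_le
    rintro ⟨a, ha⟩
    have key : ((br a b - qForm br a : ℝ) : EReal)
        = ((br a b : ℝ) : EReal) - PhiA br A a := by
      rw [phi_eq_of_mem br hsymm A hA.1 a ha, ← EReal.coe_sub]
    rw [key]
    exact le_iSup (fun c => ((br c b : ℝ) : EReal) - PhiA br A c) a
  -- conj Φ ≤ q on A
  have hconj_le : ∀ b ∈ A, intrinsicConj br (PhiA br A) b ≤ ((qForm br b : ℝ) : EReal) := by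
    intro b hb
    apply iSup_le
    intro c
    have h1 : ((br b c - qForm br b : ℝ) : EReal) ≤ PhiA br A c :=
      le_iSup (fun a : A => ((br (a : B) c - qForm br (a : B) : ℝ) : EReal)) ⟨b, hb⟩
    calc ((br c b : ℝ) : EReal) - PhiA br A c
        ≤ ((br c b : ℝ) : EReal) - ((br b c - qForm br b : ℝ) : EReal) :=
          EReal.sub_le_sub le_rfl h1
      _ = ((qForm br b : ℝ) : EReal) := by
          rw [← EReal.coe_sub, EReal.coe_eq_coe_iff, hsymm c b]; ring
  have hPqPhi : Pq br (PhiA br A) = A := by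
    ext b
    constructor
    · intro h; exact mem_of_phi_le br hsymm A hA b (le_of_eq h)
    · intro h; exact phi_eq_of_mem br hsymm A hA.1 b h
  refine ⟨⟨⟨?_, ?_⟩, ?_, ?_⟩, ?_, hPqPhi⟩
  · intro b
    exact ((EReal.bot_lt_coe _).trans_le (hqle b)).ne'
  · exact ⟨a₀, by rw [phi_eq_of_mem br hsymm A hA.1 a₀ ha₀]; exact EReal.coe_ne_top _⟩
  · -- convexity
    intro b c t ht ht1
    apply iSup_le
    rintro ⟨a, ha⟩
    have hlin : br a (t • b + (1 - t) • c) - qForm br a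
        = t * (br a b - qForm br a) + (1 - t) * (br a c - qForm br a) := by
      simp only [map_add, map_smul, smul_eq_mul]; ring
    rw [hlin, EReal.coe_add]
    exact add_le_add
      (coe_mul_le_mul' t ht _ _
        (le_iSup (fun a : A => ((br (a : B) b - qForm br (a : B) : ℝ) : EReal)) ⟨a, ha⟩))
      (coe_mul_le_mul' (1 - t) (by linarith) _ _
        (le_iSup (fun a : A => ((br (a : B) c - qForm br (a : B) : ℝ) : EReal)) ⟨a, ha⟩))
  · intro b; exact ⟨hqle b, hconj_ge b⟩
  · ext b
    constructor
    · intro h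
      have : PhiA br A b ≤ ((qForm br b : ℝ) : EReal) := le_trans (hconj_ge b) (le_of_eq h)
      exact mem_of_phi_le br hsymm A hA b this
    · intro hb
      exact le_antisymm (hconj_le b hb)
        (le_trans (hqle b) (hconj_ge b))
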